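/- Let n ≥ 3 and let G be a K_n-free simple graph on a countable vertex set V such that for every finite set H ⊆ V and every subset K ⊆ H whose induced subgraph is K_{n−1}-free (K contains no clique of size n − 1), there exists a vertex v ∈ V ∖ H that is adjacent to every vertex of K and to no vertex of H ∖ K. Then G is a maximal K_n-free graph: every simple graph on V whose edge set properly contains that of G has a clique of size n. -/
import Mathlib


/-- For `n ≥ 3`, a `K_n`-free graph `G` on a countable vertex set `V` with the Henson
extension property (for every finite `H ⊆ V` and every `K ⊆ H` whose induced subgraph is
`K_{n-1}`-free there is a vertex outside `H` adjacent to everything in `K` and to nothing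
in `H ∖ K`) is a maximal `K_n`-free graph: every simple graph on `V` whose edge set
properly contains that of `G` has a clique of size `n`. -/
theorem stmt_13 {V : Type*} [Countable V] {n : ℕ} (hn : 3 ≤ n)
    (G : SimpleGraph V) (hfree : G.CliqueFree n)
    (hext : ∀ H : Finset V, ∀ K ⊆ H,
      (∀ s : Finset V, s ⊆ K → ¬G.IsNClique (n - 1) s) →
      ∃ v : V, v ∉ H ∧ (∀ k ∈ K, G.Adj v k) ∧ ∀ h ∈ H, h ∉ K → ¬G.Adj v h) :
    ∀ H' : SimpleGraph V, G < H' → ∃ s : Finset V, H'.IsNClique n s := by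
  classical
  intro H' hlt
  obtain ⟨hle, hnle⟩ := lt_iff_le_not_ge.mp hlt
  have : ¬ ∀ a b : V, H'.Adj a b → G.Adj a b := fun h => hnle fun a b => h a b
  push_neg at this
  obtain ⟨a, b, hab, hnab⟩ := this
  have hne : a ≠ b := H'.ne_of_adj hab
  have key : ∀ k, k ≤ n - 2 → ∃ T : Finset V, T.card = k ∧
      (∀ v ∈ T, G.Adj a v ∧ G.Adj b v) ∧ (T : Set V).Pairwise G.Adj := by
    intro k
    induction k with
    | zero => intro _; exact ⟨∅, by simp, by simp, by simp⟩
    | succ k ih =>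
      intro hk
      obtain ⟨T, hcard, hadjab, hcl⟩ := ih (Nat.le_of_succ_le hk)
      set H : Finset V := insert a (insert b T) with hH
      have hfreeK : ∀ s : Finset V, s ⊆ H → ¬G.IsNClique (n - 1) s := by
        intro s hs hsclique
        have hcards : s.card = n - 1 := hsclique.2
        have hHcard : H.card ≤ k + 2 := by
          calc H.card ≤ (insert b T).card + 1 := Finset.card_insert_le _ _
            _ ≤ T.card + 1 + 1 := by
                have := Finset.card_insert_le b T
                omega
            _ = k + 2 := by omega
        have hsH : s = H := Finset.eq_of_subset_of_card_le hs (by omega)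
        have ha : a ∈ s := by rw [hsH]; simp [hH]
        have hb : b ∈ s := by rw [hsH]; simp [hH]
        exact hnab (hsclique.1 (Finset.mem_coe.mpr ha) (Finset.mem_coe.mpr hb) hne)
      obtain ⟨v, hvH, hvK, -⟩ := hext H H (Finset.Subset.refl _) hfreeK
      have hvT : v ∉ T := fun h => hvH (by simp [hH, h])
      refine ⟨insert v T, ?_, ?_, ?_⟩
      · rw [Finset.card_insert_of_notMem hvT, hcard]
      · intro w hw
        rcases Finset.mem_insert.mp hw with rfl | hwT
        · exact ⟨(hvK a (by simp [hH])).symm, (hvK b (by simp [hH])).symm⟩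
        · exact hadjab w hwT
      · intro x hx y hy hxy
        simp only [Finset.coe_insert, Set.mem_insert_iff, Finset.mem_coe] at hx hy
        rcases hx with rfl | hx <;> rcases hy with rfl | hy
        · exact absurd rfl hxy
        · exact hvK y (by simp [hH, hy])
        · exact (hvK x (by simp [hH, hx])).symm
        · exact hcl (Finset.mem_coe.mpr hx) (Finset.mem_coe.mpr hy) hxy
  obtain ⟨T, hcard, hadjab, hcl⟩ := key (n - 2) le_rfl
  have haT : a ∉ T := fun h => (G.ne_of_adj (hadjab a h).1) rfl
  have hbT : b ∉ T := fun h => (G.ne_of_adj (hadjab b h).2) rfl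
  refine ⟨insert a (insert b T), ?_, ?_⟩
  · intro x hx y hy hxy
    simp only [Finset.coe_insert, Set.mem_insert_iff, Finset.mem_coe] at hx hy
    rcases hx with rfl | rfl | hx <;> rcases hy with rfl | rfl | hy
    · exact absurd rfl hxy
    · exact hab
    · exact hle (hadjab y hy).1
    · exact hab.symm
    · exact absurd rfl hxy
    · exact hle (hadjab y hy).2
    · exact hle (hadjab x hx).1.symm
    · exact hle (hadjab x hx).2.symm
    · exact hle (hcl (Finset.mem_coe.mpr hx) (Finset.mem_coe.mpr hy) hxy)
  · rw [Finset.card_insert_of_notMem (by simp [hne, haT]),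
      Finset.card_insert_of_notMem hbT, hcard]
    omega
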